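/- arXiv:1306.5905 — 2 statements merged into one kernel-verified Lean document; each statement's English description precedes it below -/
import Mathlib

section
/- Let θ ∈ (0,1), and let g(u) = k·f_θ(q·f_θ(u)) with f_θ(h) = arctanh(θ·tanh h), k,q positive integers. If kq·θ² ≤ 1, then g(u) < u for all u > 0 and g(u) > u for all u < 0. -/
/-- The real inverse hyperbolic tangent, `arctanh x = (1/2) ln((1+x)/(1-x))`. -/
noncomputable def arctanh (x : ℝ) : ℝ := (1 / 2) * Real.log ((1 + x) / (1 - x))

/-- The Ising compatibility function `f_θ(h) = arctanh(θ · tanh h)`. -/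
noncomputable def fIsing (θ h : ℝ) : ℝ := arctanh (θ * Real.tanh h)

lemma tanh_lt_one' (x : ℝ) : Real.tanh x < 1 := by
  rw [Real.tanh_eq_sinh_div_cosh, div_lt_one (Real.cosh_pos x)]
  exact Real.sinh_lt_cosh x

lemma neg_one_lt_tanh' (x : ℝ) : -1 < Real.tanh x := by
  have := tanh_lt_one' (-x)
  rw [Real.tanh_neg] at this
  linarith

lemma tanh_pos' {x : ℝ} (hx : 0 < x) : 0 < Real.tanh x := by
  rw [Real.tanh_eq_sinh_div_cosh]
  exact div_pos (Real.sinh_pos_iff.mpr hx) (Real.cosh_pos x)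

lemma arctanh_tanh' (x : ℝ) : arctanh (Real.tanh x) = x := by
  have hc := Real.cosh_pos x
  have h1 : (1 + Real.tanh x) / (1 - Real.tanh x) = Real.exp (2 * x) := by
    rw [Real.tanh_eq_sinh_div_cosh]
    have hne : Real.cosh x - Real.sinh x ≠ 0 := by
      rw [Real.cosh_sub_sinh]; exact (Real.exp_pos _).ne'
    have ht1 : Real.sinh x / Real.cosh x < 1 := by
      rw [← Real.tanh_eq_sinh_div_cosh]; exact tanh_lt_one' x
    have hden : (0:ℝ) < 1 - Real.sinh x / Real.cosh x := by linarith
    rw [div_eq_iff hden.ne']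
    have e1 : Real.cosh x + Real.sinh x = Real.exp x := Real.cosh_add_sinh x
    have e2 : Real.cosh x - Real.sinh x = Real.exp (-x) := Real.cosh_sub_sinh x
    have e3 : Real.exp (2 * x) * Real.exp (-x) = Real.exp x := by
      rw [← Real.exp_add]; ring_nf
    field_simp
    nlinarith [e1, e2, e3, hc, show Real.exp (2 * x) * (Real.cosh x - Real.sinh x) = Real.exp x by rw [e2, e3]]
  rw [arctanh, h1, Real.log_exp]; ring

lemma arctanh_neg' {x : ℝ} (h1 : -1 < x) (h2 : x < 1) : arctanh (-x) = -arctanh x := by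
  rw [arctanh, arctanh]
  have e : (1 + -x) / (1 - -x) = ((1 + x) / (1 - x))⁻¹ := by
    rw [inv_div]; ring_nf
  rw [e, Real.log_inv]; ring

lemma arctanh_pos' {x : ℝ} (h0 : 0 < x) (h1 : x < 1) : 0 < arctanh x := by
  rw [arctanh]
  have : 1 < (1 + x) / (1 - x) := by
    rw [lt_div_iff₀ (by linarith)]; linarith
  have := Real.log_pos this
  linarith

lemma key_ineq {θ t : ℝ} (hθ0 : 0 < θ) (hθ1 : θ < 1) (ht0 : 0 < t) (ht1 : t < 1) :
    arctanh (θ * t) < θ * arctanh t := by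
  set φ : ℝ → ℝ := fun s =>
    θ * (Real.log (1 + s) - Real.log (1 - s)) -
      (Real.log (1 + θ * s) - Real.log (1 - θ * s)) with hφ
  have mono : StrictMonoOn φ (Set.Ico 0 1) := by
    apply strictMonoOn_of_deriv_pos (convex_Ico 0 1)
    · apply ContinuousOn.sub
      · apply ContinuousOn.mul continuousOn_const
        apply ContinuousOn.sub
        · exact ContinuousOn.log (by fun_prop) (fun s hs => by nlinarith [hs.1, hs.2])
        · exact ContinuousOn.log (by fun_prop) (fun s hs => by nlinarith [hs.1, hs.2])
      · apply ContinuousOn.sub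
        · exact ContinuousOn.log (by fun_prop) (fun s hs => by nlinarith [hs.1, hs.2])
        · exact ContinuousOn.log (by fun_prop) (fun s hs => by nlinarith [hs.1, hs.2])
    · intro s hs
      rw [interior_Ico] at hs
      obtain ⟨hs0, hs1⟩ := hs
      have p1 : (0:ℝ) < 1 + s := by linarith
      have p2 : (0:ℝ) < 1 - s := by linarith
      have p3 : (0:ℝ) < 1 + θ * s := by nlinarith
      have p4 : (0:ℝ) < 1 - θ * s := by nlinarith
      have h1 : HasDerivAt (fun s : ℝ => Real.log (1 + s)) (1 / (1 + s)) s := by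
        have := ((hasDerivAt_id s).const_add 1).log p1.ne'
        simpa using this
      have h2 : HasDerivAt (fun s : ℝ => Real.log (1 - s)) (-1 / (1 - s)) s := by
        have := ((hasDerivAt_id s).const_sub 1).log p2.ne'
        simpa using this
      have h3 : HasDerivAt (fun s : ℝ => Real.log (1 + θ * s)) (θ / (1 + θ * s)) s := by
        have := (((hasDerivAt_id s).const_mul θ).const_add 1).log p3.ne'
        simpa using this
      have h4 : HasDerivAt (fun s : ℝ => Real.log (1 - θ * s)) (-θ / (1 - θ * s)) s := by
        have := (((hasDerivAt_id s).const_mul θ).const_sub 1).log p4.ne'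
        simpa using this
      have total : HasDerivAt φ
          (θ * (1 / (1 + s) - -1 / (1 - s)) - (θ / (1 + θ * s) - -θ / (1 - θ * s))) s :=
        ((h1.sub h2).const_mul θ).sub (h3.sub h4)
      rw [total.deriv]
      have hd1 : (0:ℝ) < 1 - s ^ 2 := by nlinarith
      have hd2 : (0:ℝ) < 1 - (θ * s) ^ 2 := by nlinarith
      have hE : θ * (1 / (1 + s) - -1 / (1 - s)) - (θ / (1 + θ * s) - -θ / (1 - θ * s)) =
          2 * θ * s ^ 2 * (1 - θ ^ 2) / ((1 - s ^ 2) * (1 - (θ * s) ^ 2)) := by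
        rw [eq_div_iff (mul_pos hd1 hd2).ne']
        field_simp
        ring
      rw [hE]
      apply div_pos
      · have hn1 : (0:ℝ) < 1 - θ ^ 2 := by nlinarith
        have hn2 : (0:ℝ) < θ * s ^ 2 := by positivity
        nlinarith [mul_pos hn2 hn1]
      · exact mul_pos hd1 hd2
  have h0mem : (0:ℝ) ∈ Set.Ico (0:ℝ) 1 := ⟨le_rfl, one_pos⟩
  have htmem : t ∈ Set.Ico (0:ℝ) 1 := ⟨ht0.le, ht1⟩
  have hlt := mono h0mem htmem ht0
  have hφ0 : φ 0 = 0 := by simp [hφ]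
  rw [hφ0] at hlt
  have p1 : (0:ℝ) < 1 + t := by linarith
  have p2 : (0:ℝ) < 1 - t := by linarith
  have p3 : (0:ℝ) < 1 + θ * t := by nlinarith
  have p4 : (0:ℝ) < 1 - θ * t := by nlinarith
  have ha : arctanh (θ * t) = 1 / 2 * (Real.log (1 + θ * t) - Real.log (1 - θ * t)) := by
    rw [arctanh, Real.log_div p3.ne' p4.ne']
  have hb : arctanh t = 1 / 2 * (Real.log (1 + t) - Real.log (1 - t)) := by
    rw [arctanh, Real.log_div p1.ne' p2.ne']
  simp only [hφ] at hlt
  rw [ha, hb]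
  linarith

lemma fIsing_bounds {θ : ℝ} (hθ0 : 0 < θ) (hθ1 : θ < 1) {w : ℝ} (hw : 0 < w) :
    0 < fIsing θ w ∧ fIsing θ w < θ * w := by
  have ht0 := tanh_pos' hw
  have ht1 := tanh_lt_one' w
  constructor
  · exact arctanh_pos' (by positivity) (by nlinarith)
  · have := key_ineq hθ0 hθ1 ht0 ht1
    rwa [arctanh_tanh'] at this

/-- If `kqθ² ≤ 1` then `g(u) = k f_θ(q f_θ(u))` satisfies `g(u) < u` for `u > 0`
and `g(u) > u` for `u < 0`. -/
theorem g_below_diagonal (θ : ℝ) (hθ : θ ∈ Set.Ioo (0 : ℝ) 1)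
    (k q : ℕ) (hk : 0 < k) (hq : 0 < q)
    (hcrit : (k : ℝ) * q * θ ^ 2 ≤ 1) :
    (∀ u : ℝ, 0 < u → k * fIsing θ (q * fIsing θ u) < u) ∧
    (∀ u : ℝ, u < 0 → u < k * fIsing θ (q * fIsing θ u)) := by
  obtain ⟨hθ0, hθ1⟩ := hθ
  have hk1 : (1:ℝ) ≤ k := by exact_mod_cast hk
  have hq1 : (1:ℝ) ≤ q := by exact_mod_cast hq
  have main : ∀ u : ℝ, 0 < u → k * fIsing θ (q * fIsing θ u) < u := by
    intro u hu
    obtain ⟨hf1, hf2⟩ := fIsing_bounds hθ0 hθ1 hu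
    have hv : 0 < (q:ℝ) * fIsing θ u := by positivity
    obtain ⟨hg1, hg2⟩ := fIsing_bounds hθ0 hθ1 hv
    have hk0 : (0:ℝ) < k := by linarith
    have step1 : (k:ℝ) * fIsing θ ((q:ℝ) * fIsing θ u) < k * (θ * ((q:ℝ) * fIsing θ u)) :=
      mul_lt_mul_of_pos_left hg2 hk0
    have step2 : (k:ℝ) * (θ * ((q:ℝ) * fIsing θ u)) < k * (θ * ((q:ℝ) * (θ * u))) := by
      have : (0:ℝ) < k * θ * q := by positivity
      nlinarith
    have step3 : (k:ℝ) * (θ * ((q:ℝ) * (θ * u))) ≤ u := by nlinarith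
    linarith
  refine ⟨main, fun u hu => ?_⟩
  have hodd : ∀ x : ℝ, fIsing θ (-x) = -fIsing θ x := by
    intro x
    have h1 := tanh_lt_one' x
    have h2 := neg_one_lt_tanh' x
    rw [fIsing, fIsing, Real.tanh_neg, mul_neg, arctanh_neg' (by nlinarith) (by nlinarith)]
  have h := main (-u) (by linarith)
  rw [hodd u] at h
  have e : (q:ℝ) * -fIsing θ u = -((q:ℝ) * fIsing θ u) := by ring
  rw [e, hodd] at h
  linarith
end

section
/- Let θ ∈ (0,1), and let g(u) = k·f_θ(q·f_θ(u)) with f_θ(h) = arctanh(θ·tanh h), k,q positive integers with kq·θ² > 1. Then g has a unique fixed point u* > 0 on (0,∞). -/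
lemma tanh_sq_lt_one' (x : ℝ) : Real.tanh x ^ 2 < 1 := by
  have hc := Real.cosh_pos x
  have h1 : Real.cosh x ^ 2 - Real.sinh x ^ 2 = 1 := Real.cosh_sq_sub_sinh_sq x
  rw [Real.tanh_eq_sinh_div_cosh, div_pow, div_lt_one (by positivity)]
  nlinarith

lemma hasDerivAt_tanh' (x : ℝ) : HasDerivAt Real.tanh (1 - Real.tanh x ^ 2) x := by
  have hc := Real.cosh_pos x
  have h : HasDerivAt (fun y => Real.sinh y / Real.cosh y)
      ((Real.cosh x * Real.cosh x - Real.sinh x * Real.sinh x) / Real.cosh x ^ 2) x :=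
    (Real.hasDerivAt_sinh x).div (Real.hasDerivAt_cosh x) hc.ne'
  have heq : (fun y => Real.sinh y / Real.cosh y) = Real.tanh := by
    funext y; rw [Real.tanh_eq_sinh_div_cosh]
  rw [heq] at h
  convert h using 1
  have h1 : Real.cosh x ^ 2 - Real.sinh x ^ 2 = 1 := Real.cosh_sq_sub_sinh_sq x
  rw [Real.tanh_eq_sinh_div_cosh, div_pow]
  field_simp

lemma tanh_strictMono' : StrictMono Real.tanh := by
  apply strictMono_of_deriv_pos
  intro x
  rw [(hasDerivAt_tanh' x).deriv]
  have := tanh_sq_lt_one' x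
  linarith

lemma hasDerivAt_arctanh {x : ℝ} (hx : x ∈ Set.Ioo (-1 : ℝ) 1) :
    HasDerivAt arctanh (1 / (1 - x ^ 2)) x := by
  obtain ⟨h1, h2⟩ := hx
  have hp : (0 : ℝ) < 1 + x := by linarith
  have hm : (0 : ℝ) < 1 - x := by linarith
  have d1 : HasDerivAt (fun y : ℝ => Real.log (1 + y)) (1 / (1 + x)) x := by
    have h : HasDerivAt (fun y : ℝ => 1 + y) 1 x := (hasDerivAt_id x).const_add 1
    simpa using h.log hp.ne'
  have d2 : HasDerivAt (fun y : ℝ => Real.log (1 - y)) ((-1) / (1 - x)) x := by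
    have h : HasDerivAt (fun y : ℝ => 1 - y) (-1) x := (hasDerivAt_id x).const_sub 1
    simpa using h.log hm.ne'
  have hA : HasDerivAt (fun y : ℝ => (1 / 2) * (Real.log (1 + y) - Real.log (1 - y)))
      ((1 / 2) * (1 / (1 + x) - (-1) / (1 - x))) x := (d1.sub d2).const_mul _
  have heq : arctanh =ᶠ[nhds x] fun y : ℝ => (1 / 2) * (Real.log (1 + y) - Real.log (1 - y)) := by
    filter_upwards [isOpen_Ioo.mem_nhds (Set.mem_Ioo.2 ⟨h1, h2⟩)] with y hy
    have hy1 : (0 : ℝ) < 1 + y := by linarith [hy.1]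
    have hy2 : (0 : ℝ) < 1 - y := by linarith [hy.2]
    rw [arctanh, Real.log_div hy1.ne' hy2.ne']
  have := hA.congr_of_eventuallyEq heq
  refine this.congr_deriv ?_
  have hsq : (1 : ℝ) - x ^ 2 ≠ 0 := by nlinarith
  field_simp
  ring

/-- Explicit derivative of `fIsing θ`. -/
noncomputable def fIsingD (θ u : ℝ) : ℝ :=
  θ * (1 - Real.tanh u ^ 2) / (1 - θ ^ 2 * Real.tanh u ^ 2)

lemma abs_tanh_lt_one' (x : ℝ) : |Real.tanh x| < 1 := by
  have := tanh_sq_lt_one' x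
  rw [abs_lt]
  constructor <;> nlinarith

lemma theta_tanh_mem {θ : ℝ} (hθ : θ ∈ Set.Ioo (0 : ℝ) 1) (u : ℝ) :
    θ * Real.tanh u ∈ Set.Ioo (-1 : ℝ) 1 := by
  have h := abs_lt.1 (abs_tanh_lt_one' u)
  obtain ⟨h1, h2⟩ := hθ
  constructor <;> nlinarith [h.1, h.2]

lemma fIsing_hasDerivAt {θ : ℝ} (hθ : θ ∈ Set.Ioo (0 : ℝ) 1) (u : ℝ) :
    HasDerivAt (fIsing θ) (fIsingD θ u) u := by
  have hmem := theta_tanh_mem hθ u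
  have hin : HasDerivAt (fun y : ℝ => θ * Real.tanh y) (θ * (1 - Real.tanh u ^ 2)) u :=
    (hasDerivAt_tanh' u).const_mul θ
  have h := (hasDerivAt_arctanh hmem).comp u hin
  have heq : arctanh ∘ (fun y : ℝ => θ * Real.tanh y) = fIsing θ := rfl
  rw [heq] at h
  refine h.congr_deriv ?_
  rw [fIsingD, mul_pow]
  ring

lemma fIsingD_pos {θ : ℝ} (hθ : θ ∈ Set.Ioo (0 : ℝ) 1) (u : ℝ) : 0 < fIsingD θ u := by
  obtain ⟨h1, h2⟩ := hθ
  have ht := tanh_sq_lt_one' u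
  have ht0 : 0 ≤ Real.tanh u ^ 2 := sq_nonneg _
  apply div_pos <;> nlinarith

lemma fIsingD_anti {θ : ℝ} (hθ : θ ∈ Set.Ioo (0 : ℝ) 1) {u v : ℝ}
    (hu : 0 < u) (huv : u < v) : fIsingD θ v < fIsingD θ u := by
  obtain ⟨h1, h2⟩ := hθ
  have htu : 0 < Real.tanh u := by
    have := tanh_strictMono' hu
    simpa [Real.tanh_zero] using this
  have htuv : Real.tanh u < Real.tanh v := tanh_strictMono' huv
  have hs : Real.tanh u ^ 2 < Real.tanh v ^ 2 := by nlinarith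
  have h1v := tanh_sq_lt_one' v
  have h1u := tanh_sq_lt_one' u
  have hdu : (0 : ℝ) < 1 - θ ^ 2 * Real.tanh u ^ 2 := by nlinarith [sq_nonneg (Real.tanh u)]
  have hdv : (0 : ℝ) < 1 - θ ^ 2 * Real.tanh v ^ 2 := by nlinarith [sq_nonneg (Real.tanh v)]
  rw [fIsingD, fIsingD, div_lt_div_iff₀ hdv hdu]
  nlinarith [mul_pos (sub_pos.2 hs) (sub_pos.2 (show θ ^ 2 < 1 by nlinarith))]

lemma fIsing_strictMono {θ : ℝ} (hθ : θ ∈ Set.Ioo (0 : ℝ) 1) : StrictMono (fIsing θ) := by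
  apply strictMono_of_deriv_pos
  intro x
  rw [(fIsing_hasDerivAt hθ x).deriv]
  exact fIsingD_pos hθ x

lemma fIsing_zero (θ : ℝ) : fIsing θ 0 = 0 := by
  simp [fIsing, arctanh, Real.tanh_zero]

lemma fIsingD_zero {θ : ℝ} : fIsingD θ 0 = θ := by
  simp [fIsingD, Real.tanh_zero]

lemma arctanh_pos {θ : ℝ} (hθ : θ ∈ Set.Ioo (0 : ℝ) 1) : 0 < arctanh θ := by
  obtain ⟨h1, h2⟩ := hθ
  have : (1 : ℝ) < (1 + θ) / (1 - θ) := by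
    rw [lt_div_iff₀ (by linarith)]; linarith
  have := Real.log_pos this
  rw [arctanh]; linarith

lemma fIsing_le {θ : ℝ} (hθ : θ ∈ Set.Ioo (0 : ℝ) 1) (x : ℝ) : fIsing θ x ≤ arctanh θ := by
  obtain ⟨h1, h2⟩ := hθ
  have ht := abs_lt.1 (abs_tanh_lt_one' x)
  have hnum : (0 : ℝ) < 1 + θ * Real.tanh x := by nlinarith [ht.1]
  have hden : (0 : ℝ) < 1 - θ * Real.tanh x := by nlinarith [ht.2]
  have hle : (1 + θ * Real.tanh x) / (1 - θ * Real.tanh x) ≤ (1 + θ) / (1 - θ) := by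
    rw [div_le_div_iff₀ hden (by linarith)]
    nlinarith [ht.2]
  have := Real.log_le_log (by positivity) hle
  rw [fIsing, arctanh, arctanh]
  linarith

/-- If `kqθ² > 1` then `g(u) = k f_θ(q f_θ(u))` has a unique fixed point on `(0, ∞)`. -/
theorem g_unique_positive_fixed_point (θ : ℝ) (hθ : θ ∈ Set.Ioo (0 : ℝ) 1)
    (k q : ℕ) (hk : 0 < k) (hq : 0 < q)
    (hcrit : 1 < (k : ℝ) * q * θ ^ 2) :
    ∃! u : ℝ, 0 < u ∧ k * fIsing θ (q * fIsing θ u) = u := by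
  set f := fIsing θ with hf
  set g : ℝ → ℝ := fun u => (k : ℝ) * f ((q : ℝ) * f u) with hgdef
  set G : ℝ → ℝ := fun u => (k : ℝ) * (fIsingD θ ((q : ℝ) * f u) * ((q : ℝ) * fIsingD θ u))
    with hGdef
  have hkpos : (0 : ℝ) < k := Nat.cast_pos.2 hk
  have hqpos : (0 : ℝ) < q := Nat.cast_pos.2 hq
  have hg' : ∀ u, HasDerivAt g (G u) u := by
    intro u
    have hin : HasDerivAt (fun y : ℝ => (q : ℝ) * f y) ((q : ℝ) * fIsingD θ u) u :=
      (fIsing_hasDerivAt hθ u).const_mul _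
    exact (((fIsing_hasDerivAt hθ ((q : ℝ) * f u)).comp u hin).const_mul _)
  have hgc : Continuous g := by
    have : Differentiable ℝ g := fun u => (hg' u).differentiableAt
    exact this.continuous
  have hf0 : f 0 = 0 := fIsing_zero θ
  have hg0 : g 0 = 0 := by simp [hgdef, hf0, fIsing_zero θ, hf]
  have hfpos : ∀ u, 0 < u → 0 < f u := by
    intro u hu
    simpa [fIsing_zero θ] using fIsing_strictMono hθ hu
  -- G is strictly antitone on positives
  have hGanti : ∀ u v : ℝ, 0 < u → u < v → G v < G u := by
    intro u v hu huv
    have h1 : fIsingD θ v < fIsingD θ u := fIsingD_anti hθ hu huv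
    have hfu : 0 < f u := hfpos u hu
    have hfuv : (q : ℝ) * f u < (q : ℝ) * f v :=
      mul_lt_mul_of_pos_left (fIsing_strictMono hθ huv) hqpos
    have h2 : fIsingD θ ((q : ℝ) * f v) < fIsingD θ ((q : ℝ) * f u) :=
      fIsingD_anti hθ (by positivity) hfuv
    have hp1 := fIsingD_pos hθ ((q : ℝ) * f v)
    have hp2 := fIsingD_pos hθ v
    rw [hGdef]
    have : fIsingD θ ((q : ℝ) * f v) * ((q : ℝ) * fIsingD θ v)
        < fIsingD θ ((q : ℝ) * f u) * ((q : ℝ) * fIsingD θ u) := by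
      apply mul_lt_mul'' h2 (by nlinarith) hp1.le (by positivity)
    exact mul_lt_mul_of_pos_left this hkpos
  -- small u : g u > u
  have hG0 : G 0 = (k : ℝ) * q * θ ^ 2 := by
    simp only [hGdef, hf, fIsing_zero θ, mul_zero, fIsingD_zero]
    ring
  obtain ⟨a, ha0, hab, hga⟩ : ∃ a : ℝ, 0 < a ∧ a < (k : ℝ) * arctanh θ + 1 ∧ a < g a := by
    have hφ : HasDerivAt (fun u => g u - u) ((k : ℝ) * q * θ ^ 2 - 1) 0 := by
      have := (hg' 0).sub (hasDerivAt_id 0)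
      rwa [hG0] at this
    have hT := hasDerivAt_iff_tendsto_slope.1 hφ
    have hev : ∀ᶠ x in nhdsWithin 0 {(0 : ℝ)}ᶜ,
        0 < slope (fun u => g u - u) 0 x :=
      hT.eventually (eventually_gt_nhds (by linarith))
    have hev' : ∀ᶠ x in nhdsWithin 0 (Set.Ioi 0),
        0 < slope (fun u => g u - u) 0 x :=
      hev.filter_mono (nhdsWithin_mono 0
        (fun x hx => Set.mem_compl_singleton_iff.2 (Set.mem_Ioi.1 hx).ne'))
    have hsmall : ∀ᶠ x in nhdsWithin 0 (Set.Ioi 0),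
        x < (k : ℝ) * arctanh θ + 1 := by
      apply eventually_nhdsWithin_of_eventually_nhds
      apply eventually_lt_nhds
      nlinarith [mul_pos hkpos (arctanh_pos hθ)]
    have hmem : ∀ᶠ x in nhdsWithin 0 (Set.Ioi 0), x ∈ Set.Ioi (0 : ℝ) :=
      self_mem_nhdsWithin
    obtain ⟨x, ⟨hx1, hx2⟩, hx3⟩ := ((hev'.and hsmall).and hmem).exists
    refine ⟨x, hx3, hx2, ?_⟩
    have hxpos : (0 : ℝ) < x := hx3
    have hs : slope (fun u => g u - u) 0 x = (g x - x) / x := by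
      rw [slope_def_field, hg0]; ring_nf
    rw [hs] at hx1
    have h2 := mul_pos hx1 hxpos
    rw [div_mul_cancel₀ _ hxpos.ne'] at h2
    linarith
  -- a fixed point exists in [a, b]
  set b : ℝ := (k : ℝ) * arctanh θ + 1 with hbdef
  have hgb : g b - b < 0 := by
    have : g b ≤ (k : ℝ) * arctanh θ :=
      mul_le_mul_of_nonneg_left (fIsing_le hθ _) hkpos.le
    simp only [hbdef]; linarith
  have hφc : ContinuousOn (fun u => g u - u) (Set.Icc a b) :=
    (hgc.sub continuous_id).continuousOn
  have h0mem : (0 : ℝ) ∈ Set.Icc ((fun u => g u - u) b) ((fun u => g u - u) a) :=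
    ⟨hgb.le, by show (0 : ℝ) ≤ g a - a; linarith⟩
  obtain ⟨u, hu, hu0⟩ := intermediate_value_Icc' hab.le hφc h0mem
  have hupos : 0 < u := lt_of_lt_of_le ha0 hu.1
  have hufix : g u = u := by
    have : g u - u = 0 := hu0
    linarith
  -- uniqueness : no two distinct positive fixed points
  have key : ∀ x y : ℝ, 0 < x → g x = x → g y = y → x < y → False := by
    intro x y hx hgx hgy hxy
    obtain ⟨c, hc, hc1⟩ :=
      exists_hasDerivAt_eq_slope g G hx hgc.continuousOn (fun z _ => hg' z)
    obtain ⟨d, hd, hd1⟩ :=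
      exists_hasDerivAt_eq_slope g G hxy hgc.continuousOn (fun z _ => hg' z)
    have hGc : G c = 1 := by
      rw [hc1, hg0, hgx]; field_simp; rw [sub_zero, div_self hx.ne']
    have hGd : G d = 1 := by
      rw [hd1, hgx, hgy, div_self (sub_ne_zero.2 hxy.ne')]
    have := hGanti c d hc.1 (lt_trans hc.2 hd.1)
    rw [hGc, hGd] at this
    exact lt_irrefl 1 this
  refine ⟨u, ⟨hupos, hufix⟩, ?_⟩
  rintro y ⟨hy, hyfix⟩
  rcases lt_trichotomy y u with h | h | h
  · exact absurd (key y u hy hyfix hufix h) (fun hh => hh)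
  · exact h
  · exact absurd (key u y hupos hufix hyfix h) (fun hh => hh)
end
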